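/- Let φ : X → Y be an extension of compact minimal flows of a topological group T. Then the induced extensions of hyperflows 2^φ : 2^X → 2^Y and 2^{2^φ} : 2^{2^X} → 2^{2^Y} are both semi-open. -/

import Mathlib

/-- The hyperspace `2^X` of all nonempty closed subsets of `X`. -/
def Hyper (X : Type*) [TopologicalSpace X] : Type _ := {K : Set X // IsClosed K ∧ K.Nonempty}

/-- The Vietoris topology on the hyperspace, generated by the subbasic sets
`{K | K ⊆ U}` and `{K | K ∩ U ≠ ∅}` for `U` open. -/
instance Hyper.instTopologicalSpace (X : Type*) [TopologicalSpace X] :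
    TopologicalSpace (Hyper X) :=
  TopologicalSpace.generateFrom
    ({S | ∃ U : Set X, IsOpen U ∧ S = {K : Hyper X | K.1 ⊆ U}} ∪
     {S | ∃ U : Set X, IsOpen U ∧ S = {K : Hyper X | (K.1 ∩ U).Nonempty}})

/-- The induced map `2^f : 2^X → 2^Y`, `K ↦ f[K]`.  (For closed subsets of a compact
space and continuous `f` into a Hausdorff space the image `f[K]` is closed, so taking
the closure below is redundant and this is indeed `K ↦ f[K]`.) -/
def hyperMap {X Y : Type*} [TopologicalSpace X] [TopologicalSpace Y] (f : X → Y) :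
    Hyper X → Hyper Y :=
  fun K => ⟨closure (f '' K.1), isClosed_closure, (K.2.2.image f).closure⟩

/-- A continuous surjection `g : A → B` is *semi-open* if for every nonempty open set
`U ⊆ A`, the interior of the image `g '' U` is nonempty. -/
def SemiOpen {A B : Type*} [TopologicalSpace A] [TopologicalSpace B] (g : A → B) : Prop :=
  ∀ U : Set A, IsOpen U → U.Nonempty → (interior (g '' U)).Nonempty

section HyperAux

open Set Topology TopologicalSpace

variable {X : Type*} [TopologicalSpace X]

def hUp (U : Set X) : Set (Hyper X) := {K | K.1 ⊆ U}
def hHit (U : Set X) : Set (Hyper X) := {K | (K.1 ∩ U).Nonempty}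

lemma isOpen_hUp {U : Set X} (hU : IsOpen U) : IsOpen (hUp U) :=
  TopologicalSpace.isOpen_generateFrom_of_mem (Or.inl ⟨U, hU, rfl⟩)

lemma isOpen_hHit {U : Set X} (hU : IsOpen U) : IsOpen (hHit U) :=
  TopologicalSpace.isOpen_generateFrom_of_mem (Or.inr ⟨U, hU, rfl⟩)

def vb (A : Set X) (B : Set (Set X)) : Set (Hyper X) :=
  {M | M.1 ⊆ A ∧ ∀ U ∈ B, (M.1 ∩ U).Nonempty}

lemma isOpen_vb {A : Set X} {B : Set (Set X)} (hA : IsOpen A) (hB : B.Finite)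
    (hBo : ∀ U ∈ B, IsOpen U) : IsOpen (vb A B) := by
  have : vb A B = hUp A ∩ ⋂ U ∈ B, hHit U := by
    ext M; simp [vb, hUp, hHit]
  rw [this]
  exact (isOpen_hUp hA).inter (hB.isOpen_biInter fun U hU => isOpen_hHit (hBo U hU))

lemma exists_vb_subset {W : Set (Hyper X)} (hW : IsOpen W) :
    ∀ K ∈ W, ∃ (A : Set X) (B : Set (Set X)), IsOpen A ∧ B.Finite ∧
      (∀ U ∈ B, IsOpen U) ∧ K ∈ vb A B ∧ vb A B ⊆ W := by
  have hW' : TopologicalSpace.GenerateOpen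
      ({S | ∃ U : Set X, IsOpen U ∧ S = {K : Hyper X | K.1 ⊆ U}} ∪
       {S | ∃ U : Set X, IsOpen U ∧ S = {K : Hyper X | (K.1 ∩ U).Nonempty}}) W := hW
  clear hW
  induction hW' with
  | basic s hs =>
      intro K hK
      rcases hs with ⟨U, hU, rfl⟩ | ⟨U, hU, rfl⟩
      · exact ⟨U, ∅, hU, finite_empty, by simp, ⟨hK, by simp⟩, fun M hM => hM.1⟩
      · exact ⟨univ, {U}, isOpen_univ, finite_singleton _, by simpa using hU,
          ⟨subset_univ _, by simpa using hK⟩, fun M hM => by simpa using hM.2 U rfl⟩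
  | univ => exact fun K _ => ⟨univ, ∅, isOpen_univ, finite_empty, by simp,
      ⟨subset_univ _, by simp⟩, fun _ _ => trivial⟩
  | inter s t _ _ ihs iht =>
      intro K hK
      obtain ⟨A₁, B₁, hA₁, hB₁, hB₁o, hK₁, hsub₁⟩ := ihs K hK.1
      obtain ⟨A₂, B₂, hA₂, hB₂, hB₂o, hK₂, hsub₂⟩ := iht K hK.2
      refine ⟨A₁ ∩ A₂, B₁ ∪ B₂, hA₁.inter hA₂, hB₁.union hB₂,
        fun U hU => hU.elim (hB₁o U) (hB₂o U),
        ⟨subset_inter hK₁.1 hK₂.1, fun U hU => hU.elim (hK₁.2 U) (hK₂.2 U)⟩,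
        fun M hM => ⟨hsub₁ ⟨hM.1.trans inter_subset_left, fun U hU => hM.2 U (Or.inl hU)⟩,
          hsub₂ ⟨hM.1.trans inter_subset_right, fun U hU => hM.2 U (Or.inr hU)⟩⟩⟩
  | sUnion S _ ih =>
      intro K hK
      obtain ⟨s, hsS, hKs⟩ := hK
      obtain ⟨A, B, h1, h2, h3, h4, h5⟩ := ih s hsS K hKs
      exact ⟨A, B, h1, h2, h3, h4, h5.trans (subset_sUnion_of_mem hsS)⟩

open Set Topology TopologicalSpace Filter

instance Hyper.compactSpace {X : Type*} [TopologicalSpace X] [CompactSpace X] :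
    CompactSpace (Hyper X) := by
  classical
  rw [← isCompact_univ_iff, isCompact_iff_ultrafilter_le_nhds]
  intro F _
  set K : Set X := {x | ∀ U : Set X, IsOpen U → x ∈ U → hHit U ∈ F} with hKdef
  have hKclosed : IsClosed K := by
    rw [← isOpen_compl_iff, isOpen_iff_forall_mem_open]
    intro x hx
    simp only [hKdef, mem_compl_iff, mem_setOf_eq, not_forall] at hx
    obtain ⟨U, hU, hxU, hUF⟩ := hx
    exact ⟨U, fun y hy hycontra => hUF (hycontra U hU hy), hU, hxU⟩
  have hKne : K.Nonempty := by
    by_contra hKe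
    rw [not_nonempty_iff_eq_empty] at hKe
    have hch : ∀ x : X, ∃ U : Set X, IsOpen U ∧ x ∈ U ∧ hHit U ∉ F := by
      intro x
      have : x ∉ K := by rw [hKe]; exact notMem_empty x
      rw [hKdef, mem_setOf_eq] at this; push_neg at this; exact this
    choose V hVo hVx hVF using hch
    obtain ⟨s, hs⟩ := IsCompact.elim_finite_subcover isCompact_univ V hVo
      (fun x _ => mem_iUnion.2 ⟨x, hVx x⟩)
    have hmem : (⋂ x ∈ s, (hHit (V x))ᶜ) ∈ F := by
      refine (Filter.biInter_mem s.finite_toSet).2 fun x _ => ?_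
      exact Ultrafilter.compl_mem_iff_notMem.2 (hVF x)
    obtain ⟨M, hM⟩ := Filter.nonempty_of_mem hmem
    obtain ⟨p, hp⟩ := M.2.2
    obtain ⟨x, hxs, hpx⟩ : ∃ x ∈ s, p ∈ V x := by
      have := hs (mem_univ p); simpa using this
    have : M ∈ (hHit (V x))ᶜ := by
      simp only [mem_iInter] at hM; exact hM x hxs
    exact this ⟨p, hp, hpx⟩
  refine ⟨⟨K, hKclosed, hKne⟩, mem_univ _, ?_⟩
  have hnhds : @nhds (Hyper X) (Hyper.instTopologicalSpace X) ⟨K, hKclosed, hKne⟩ =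
      ⨅ s ∈ {s | (⟨K, hKclosed, hKne⟩ : Hyper X) ∈ s ∧ s ∈
        ({S | ∃ U : Set X, IsOpen U ∧ S = {M : Hyper X | M.1 ⊆ U}} ∪
         {S | ∃ U : Set X, IsOpen U ∧ S = {M : Hyper X | (M.1 ∩ U).Nonempty}})}, 𝓟 s :=
    nhds_generateFrom
  rw [hnhds]
  refine le_iInf₂ fun s hs => ?_
  rw [le_principal_iff]
  obtain ⟨hKin, hsg⟩ := hs
  rcases hsg with ⟨U, hU, rfl⟩ | ⟨U, hU, rfl⟩
  · -- s = hUp U, with K ⊆ U; show {M | M.1 ⊆ U} ∈ F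
    by_contra hn
    have hcompl : {M : Hyper X | ¬ M.1 ⊆ U} ∈ F := by
      have := Ultrafilter.compl_mem_iff_notMem.2 hn
      simpa [compl_setOf] using this
    have hUc : IsCompact Uᶜ := hU.isClosed_compl.isCompact
    have hch : ∀ x ∈ Uᶜ, ∃ V : Set X, IsOpen V ∧ x ∈ V ∧ hHit V ∉ F := by
      intro x hx
      have : x ∉ K := fun hxK => hx (hKin hxK)
      rw [hKdef, mem_setOf_eq] at this; push_neg at this; exact this
    choose! V hVo hVx hVF using hch
    set V' : X → Set X := fun x => if x ∈ Uᶜ then V x else U with hV'def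
    have hV'o : ∀ x, IsOpen (V' x) := by
      intro x; rw [hV'def]; dsimp only; split_ifs with h
      exacts [hVo x h, hU]
    obtain ⟨t, ht⟩ := hUc.elim_finite_subcover V' hV'o
      (fun x hx => mem_iUnion.2 ⟨x, by
        show x ∈ if x ∈ Uᶜ then V x else U
        rw [if_pos hx]; exact hVx x hx⟩)
    have hmem : ({M : Hyper X | ¬ M.1 ⊆ U} ∩ ⋂ x ∈ ({x ∈ (t : Set X) | x ∈ Uᶜ}), (hHit (V x))ᶜ) ∈ F := by
      refine Filter.inter_mem hcompl ?_
      refine (Filter.biInter_mem (t.finite_toSet.subset (sep_subset _ _))).2 ?_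
      rintro x ⟨-, hx⟩
      exact Ultrafilter.compl_mem_iff_notMem.2 (hVF x hx)
    obtain ⟨M, hM1, hM2⟩ := Filter.nonempty_of_mem hmem
    obtain ⟨p, hpM, hpU⟩ := not_subset.1 hM1
    obtain ⟨x, hxt, hpx⟩ : ∃ x ∈ t, p ∈ V' x := by
      have := ht hpU; simpa using this
    have hxUc : x ∈ Uᶜ := by
      by_contra hxU
      have : p ∈ (if x ∈ Uᶜ then V x else U) := hpx
      rw [if_neg hxU] at this
      exact hpU this
    have hpx' : p ∈ (if x ∈ Uᶜ then V x else U) := hpx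
    rw [if_pos hxUc] at hpx'
    have : M ∈ (hHit (V x))ᶜ := by
      simp only [mem_iInter] at hM2
      exact hM2 x ⟨hxt, hxUc⟩
    exact this ⟨p, hpM, hpx'⟩
  · obtain ⟨x, hxK, hxU⟩ := hKin
    exact hxK U hU hxU

instance Hyper.t2Space {X : Type*} [TopologicalSpace X] [CompactSpace X] [T2Space X] :
    T2Space (Hyper X) := by
  have key : ∀ K L : Hyper X, ∀ x, x ∈ K.1 → x ∉ L.1 →
      ∃ u v : Set (Hyper X), IsOpen u ∧ IsOpen v ∧ K ∈ u ∧ L ∈ v ∧ Disjoint u v := by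
    intro K L x hxK hxL
    obtain ⟨u, v, hu, hv, hxu, hLv, huv⟩ :=
      SeparatedNhds.of_isCompact_isClosed (isCompact_singleton (x := x)) L.2.1
        (by simpa using hxL)
    refine ⟨hHit u, hUp v, isOpen_hHit hu, isOpen_hUp hv, ⟨x, hxK, hxu rfl⟩, hLv, ?_⟩
    rw [Set.disjoint_left]
    rintro M ⟨p, hpM, hpu⟩ hMv
    exact Set.disjoint_left.1 huv hpu (hMv hpM)
  refine ⟨fun K L hKL => ?_⟩
  have : ¬ (K.1 ⊆ L.1 ∧ L.1 ⊆ K.1) := by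
    rintro ⟨h1, h2⟩; exact hKL (Subtype.ext (le_antisymm h1 h2))
  rw [not_and_or] at this
  rcases this with h | h
  · obtain ⟨x, hxK, hxL⟩ := Set.not_subset.1 h
    exact key K L x hxK hxL
  · obtain ⟨x, hxL, hxK⟩ := Set.not_subset.1 h
    obtain ⟨u, v, hu, hv, hLu, hKv, huv⟩ := key L K x hxL hxK
    exact ⟨v, u, hv, hu, hKv, hLu, huv.symm⟩

open Set in
lemma hyperMap_coe {X Y : Type*} [TopologicalSpace X] [TopologicalSpace Y]
    [CompactSpace X] [T2Space Y] {φ : X → Y} (hc : Continuous φ) (K : Hyper X) :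
    (hyperMap φ K).1 = φ '' K.1 :=
  ((K.2.1.isCompact.image hc).isClosed).closure_eq

open Set in
lemma hyperMap_surjective {X Y : Type*} [TopologicalSpace X] [TopologicalSpace Y]
    [CompactSpace X] [T2Space Y] {φ : X → Y} (hc : Continuous φ)
    (hs : Function.Surjective φ) : Function.Surjective (hyperMap φ) := by
  intro L
  refine ⟨⟨φ ⁻¹' L.1, L.2.1.preimage hc, ?_⟩, ?_⟩
  · obtain ⟨y, hy⟩ := L.2.2
    obtain ⟨x, rfl⟩ := hs y
    exact ⟨x, hy⟩
  · apply Subtype.ext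
    refine (hyperMap_coe hc _).trans ?_
    exact Set.image_preimage_eq L.1 hs

open Set in
lemma hyperMap_continuous {X Y : Type*} [TopologicalSpace X] [TopologicalSpace Y]
    [CompactSpace X] [T2Space Y] {φ : X → Y} (hc : Continuous φ) :
    Continuous (hyperMap φ) := by
  apply continuous_generateFrom_iff.2
  rintro s (⟨U, hU, rfl⟩ | ⟨U, hU, rfl⟩)
  · have : hyperMap φ ⁻¹' {L : Hyper Y | L.1 ⊆ U} = hUp (φ ⁻¹' U) := by
      ext K
      simp only [mem_preimage, mem_setOf_eq, hyperMap_coe hc, hUp, image_subset_iff]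
    rw [this]; exact isOpen_hUp (hU.preimage hc)
  · have : hyperMap φ ⁻¹' {L : Hyper Y | (L.1 ∩ U).Nonempty} = hHit (φ ⁻¹' U) := by
      ext K
      simp only [mem_preimage, mem_setOf_eq, hyperMap_coe hc, hHit]
      constructor
      · rintro ⟨y, ⟨x, hxK, rfl⟩, hyU⟩; exact ⟨x, hxK, hyU⟩
      · rintro ⟨x, hxK, hxU⟩; exact ⟨φ x, ⟨x, hxK, rfl⟩, hxU⟩
    rw [this]; exact isOpen_hHit (hU.preimage hc)

open Set in
lemma semiOpen_hyperMap_aux {X Y : Type*} [TopologicalSpace X] [TopologicalSpace Y]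
    [CompactSpace X] [T2Space X] [T2Space Y] {φ : X → Y}
    (hc : Continuous φ) (hso : SemiOpen φ) : SemiOpen (hyperMap φ) := by
  classical
  rintro W hW ⟨K₀, hK₀⟩
  obtain ⟨A, B, hA, hBfin, hBo, ⟨hK₀A, hK₀B⟩, hsub⟩ := exists_vb_subset hW K₀ hK₀
  set 𝒞 : Set (Set X) := insert A ((fun U => U ∩ A) '' B) with h𝒞
  have h𝒞fin : 𝒞.Finite := (hBfin.image _).insert A
  have h𝒞o : ∀ C ∈ 𝒞, IsOpen C := by
    rintro C (rfl | ⟨U, hU, rfl⟩)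
    · exact hA
    · exact (hBo U hU).inter hA
  have h𝒞K₀ : ∀ C ∈ 𝒞, (K₀.1 ∩ C).Nonempty := by
    rintro C (rfl | ⟨U, hU, rfl⟩)
    · obtain ⟨x, hx⟩ := K₀.2.2; exact ⟨x, hx, hK₀A hx⟩
    · obtain ⟨x, hx1, hx2⟩ := hK₀B U hU
      exact ⟨x, hx1, hx2, hK₀A hx1⟩
  have h𝒞A : ∀ C ∈ 𝒞, C ⊆ A := by
    rintro C (rfl | ⟨U, hU, rfl⟩)
    · exact subset_rfl
    · exact inter_subset_right
  have hvb𝒞 : vb A 𝒞 ⊆ W := by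
    refine subset_trans ?_ hsub
    rintro M ⟨hMA, hM⟩
    refine ⟨hMA, fun U hU => ?_⟩
    obtain ⟨x, hx1, hx2, _⟩ := hM (U ∩ A) (Or.inr ⟨U, hU, rfl⟩)
    exact ⟨x, hx1, hx2⟩
  have hch : ∀ C ∈ 𝒞, ∃ V : Set X, IsOpen V ∧ V.Nonempty ∧ closure V ⊆ C := by
    intro C hC
    obtain ⟨x, _, hxC⟩ := h𝒞K₀ C hC
    obtain ⟨t, htx, htc, hts⟩ := exists_mem_nhds_isClosed_subset ((h𝒞o C hC).mem_nhds hxC)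
    exact ⟨interior t, isOpen_interior, ⟨x, mem_interior_iff_mem_nhds.2 htx⟩,
      (closure_minimal interior_subset htc).trans hts⟩
  choose! Wo hWoO hWoNe hWoCl using hch
  set V : Set X → Set Y := fun C => interior (φ '' Wo C) with hV
  have hVne : ∀ C ∈ 𝒞, (V C).Nonempty := fun C hC => hso (Wo C) (hWoO C hC) (hWoNe C hC)
  set O : Set (Hyper Y) := hUp (⋃ C ∈ 𝒞, V C) ∩ ⋂ C ∈ 𝒞, hHit (V C) with hO
  have hOopen : IsOpen O :=
    (isOpen_hUp (isOpen_biUnion fun C _ => isOpen_interior)).inter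
      (h𝒞fin.isOpen_biInter fun C hC => isOpen_hHit isOpen_interior)
  -- O is nonempty
  have : Nonempty Y := ⟨φ K₀.2.2.choose⟩
  choose! y hy using hVne
  have hL₀ : ∃ L₀ : Hyper Y, L₀ ∈ O := by
    have hne : (y '' 𝒞).Nonempty := ⟨y A, mem_image_of_mem y (mem_insert A _)⟩
    refine ⟨⟨y '' 𝒞, (h𝒞fin.image y).isClosed, hne⟩, ?_, ?_⟩
    · rintro _ ⟨C, hC, rfl⟩
      exact mem_biUnion hC (hy C hC)
    · refine mem_iInter₂.2 ?_
      exact fun C hC => ⟨y C, mem_image_of_mem y hC, hy C hC⟩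
  -- every L ∈ O is in the image of W under hyperMap φ
  have hOsub : O ⊆ hyperMap φ '' W := by
    rintro L ⟨hL1, hL2⟩
    simp only [mem_iInter] at hL2
    set S : Set X := ⋃ C ∈ 𝒞, (Wo C ∩ φ ⁻¹' L.1) with hS
    have hKA : closure S ⊆ A := by
      have h1 : closure S ⊆ ⋃ C ∈ 𝒞, closure (Wo C) := by
        refine closure_minimal (iUnion₂_mono fun C hC => ?_)
          (h𝒞fin.isClosed_biUnion fun C _ => isClosed_closure)
        exact inter_subset_left.trans subset_closure
      refine h1.trans (iUnion₂_subset fun C hC => (hWoCl C hC).trans (h𝒞A C hC))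
    have hmeets : ∀ C ∈ 𝒞, (closure S ∩ C).Nonempty := by
      intro C hC
      obtain ⟨z, hzL, hzV⟩ := hL2 C hC
      obtain ⟨x, hxW, hxz⟩ := interior_subset hzV
      refine ⟨x, subset_closure (mem_biUnion hC ⟨hxW, by rw [mem_preimage, hxz]; exact hzL⟩),
        hWoCl C hC (subset_closure hxW)⟩
    have hKne : (closure S).Nonempty := by
      obtain ⟨x, hx, _⟩ := hmeets A (mem_insert A _)
      exact ⟨x, hx⟩
    have himage : φ '' closure S = L.1 := by
      apply subset_antisymm
      · refine (image_closure_subset_closure_image hc).trans ?_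
        have : φ '' S ⊆ L.1 := by
          rintro _ ⟨x, hxS, rfl⟩
          rw [hS, mem_iUnion₂] at hxS
          obtain ⟨C, hC, _, hx2⟩ := hxS
          exact hx2
        exact (closure_mono this).trans L.2.1.closure_eq.subset
      · intro z hzL
        obtain ⟨C, hC, hzV⟩ := mem_iUnion₂.1 (hL1 hzL)
        obtain ⟨x, hxW, hxz⟩ := interior_subset hzV
        exact ⟨x, subset_closure (mem_biUnion hC ⟨hxW, by rw [mem_preimage, hxz]; exact hzL⟩), hxz⟩
    refine ⟨⟨closure S, isClosed_closure, hKne⟩, hvb𝒞 ⟨hKA, hmeets⟩, ?_⟩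
    apply Subtype.ext
    refine (hyperMap_coe hc _).trans ?_
    exact himage
  obtain ⟨L₀, hL₀O⟩ := hL₀
  exact ⟨L₀, interior_maximal hOsub hOopen hL₀O⟩

open Set Pointwise in
lemma semiOpen_of_minimal {T X Y : Type*} [Group T] [TopologicalSpace T] [IsTopologicalGroup T]
    [TopologicalSpace X] [CompactSpace X] [T2Space X] [MulAction T X] [ContinuousSMul T X]
    [TopologicalSpace Y] [CompactSpace Y] [T2Space Y] [MulAction T Y] [ContinuousSMul T Y]
    {φ : X → Y} (hc : Continuous φ) (hs : Function.Surjective φ)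
    (hequiv : ∀ (t : T) (x : X), φ (t • x) = t • φ x)
    (hminX : ∀ x : X, Dense (MulAction.orbit T x)) : SemiOpen φ := by
  rintro U hU ⟨x₀, hx₀⟩
  obtain ⟨t0, ht0x, ht0c, ht0s⟩ := exists_mem_nhds_isClosed_subset (hU.mem_nhds hx₀)
  set V := interior t0 with hVdef
  have hVo : IsOpen V := isOpen_interior
  have hVne : V.Nonempty := ⟨x₀, mem_interior_iff_mem_nhds.2 ht0x⟩
  have hVcl : closure V ⊆ U := (closure_minimal interior_subset ht0c).trans ht0s
  have hcover : (univ : Set X) ⊆ ⋃ t : T, t • V := by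
    intro x _
    obtain ⟨yy, hyo, hyV⟩ := (hminX x).exists_mem_open hVo hVne
    obtain ⟨g, rfl⟩ := MulAction.mem_orbit_iff.1 hyo
    exact mem_iUnion.2 ⟨g⁻¹, ⟨g • x, hyV, inv_smul_smul g x⟩⟩
  obtain ⟨s, hsc⟩ := isCompact_univ.elim_finite_subcover (fun t : T => t • V)
    (fun t => hVo.smul t) hcover
  have hNy : Nonempty Y := ⟨φ x₀⟩
  have hclosed : ∀ t : T, IsClosed (t • (φ '' closure V)) :=
    fun t => (isClosed_closure.isCompact.image hc).isClosed.smul t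
  have hYcover : (⋃ i : {t : T // t ∈ s}, (i : T) • (φ '' closure V)) = univ := by
    apply eq_univ_of_forall
    intro y
    obtain ⟨x, rfl⟩ := hs y
    obtain ⟨t, hts, hxt⟩ : ∃ t ∈ s, x ∈ t • V := by
      have := hsc (mem_univ x); simpa using this
    obtain ⟨v, hvV, rfl⟩ := hxt
    exact mem_iUnion.2 ⟨⟨t, hts⟩, φ v, ⟨v, subset_closure hvV, rfl⟩, (hequiv t v).symm⟩
  obtain ⟨t, hint⟩ := nonempty_interior_of_iUnion_of_closed
    (fun i : {t : T // t ∈ s} => hclosed i) hYcover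
  have h1 : interior ((t : T) • (φ '' closure V)) = (t : T) • interior (φ '' closure V) := by
    have he := (Homeomorph.smul ((t : T)) (α := Y)).image_interior (φ '' closure V)
    simpa [Set.image_smul] using he.symm
  rw [h1] at hint
  obtain ⟨z, hz⟩ := hint
  obtain ⟨w, hw, rfl⟩ := hz
  exact ⟨w, interior_mono (image_mono (f := φ) hVcl) hw⟩


end HyperAux

/-- Corollary 7(1). -/
theorem semiOpen_hyperMap_of_minimal
    {T X Y : Type*} [Group T] [TopologicalSpace T] [IsTopologicalGroup T]
    [TopologicalSpace X] [CompactSpace X] [T2Space X]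
    [MulAction T X] [ContinuousSMul T X]
    [TopologicalSpace Y] [CompactSpace Y] [T2Space Y]
    [MulAction T Y] [ContinuousSMul T Y]
    {φ : X → Y} (hc : Continuous φ) (hs : Function.Surjective φ)
    (hequiv : ∀ (t : T) (x : X), φ (t • x) = t • φ x)
    (hminX : ∀ x : X, Dense (MulAction.orbit T x))
    (hminY : ∀ y : Y, Dense (MulAction.orbit T y)) :
    SemiOpen (hyperMap φ) ∧ SemiOpen (hyperMap (hyperMap φ)) := by
  have hφ : SemiOpen φ := semiOpen_of_minimal hc hs hequiv hminX
  have h1 : SemiOpen (hyperMap φ) := semiOpen_hyperMap_aux hc hφ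
  exact ⟨h1, semiOpen_hyperMap_aux (hyperMap_continuous hc) h1⟩
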